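/- If the directed bipartite graph from sources to observed variables defined by a mixing matrix A ∈ ℝ^{n×n} (with an edge s_j → x_i whenever A_{i,j} ≠ 0) contains no undirected cycle (i.e., is a polytree/forest as an undirected graph), then there exist permutation matrices P₁, P₂ such that P₁ᵀ·A·P₂ is lower triangular. -/

import Mathlib

open SimpleGraph Finset

open SimpleGraph Finset

lemma forest_card_edge_lt {V : Type*} [Fintype V] [Nonempty V]
    (G : SimpleGraph V) [Fintype G.edgeSet] (h : G.IsAcyclic) :
    G.edgeFinset.card < Fintype.card V := by
  classical
  set root : V → V := fun v => (G.connectedComponentMk v).out with hrootdef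
  have hreach : ∀ v, G.Reachable v (root v) := by
    intro v
    have := (G.connectedComponentMk v).out_eq
    exact (SimpleGraph.ConnectedComponent.eq.mp this).symm
  have hrootadj : ∀ {x y : V}, G.Adj x y → root y = root x := by
    intro x y hxy
    simp only [hrootdef]
    rw [SimpleGraph.ConnectedComponent.eq.mpr hxy.symm.reachable]
  have hrootroot : ∀ v, root (root v) = root v := by
    intro v
    simp only [hrootdef]
    exact congrArg Quot.out (G.connectedComponentMk v).out_eq
  let f : ∀ v, G.Path v (root v) := fun v => (hreach v).some.toPath
  have huniq : ∀ v (p : G.Walk v (root v)), p.IsPath → p = (f v : G.Walk v (root v)) := by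
    intro v p hp
    exact congrArg Subtype.val (h.path_unique ⟨p, hp⟩ (f v))
  -- at a root, the chosen path is nil (length 0)
  have hlen0 : ∀ v, root v = v → (f v : G.Walk v (root v)).length = 0 := by
    intro v hv
    have hq : ((Walk.nil : G.Walk v v).copy rfl hv.symm).IsPath := by
      simp
    have := huniq v _ hq
    have := congrArg Walk.length this
    simpa using this.symm
  -- dichotomy for edges
  have hdich : ∀ {x y : V}, G.Adj x y →
      ∃ z w : V, s(x, y) = s(z, w) ∧ (f z : G.Walk z (root z)).getVert 1 = w ∧
        (f z : G.Walk z (root z)).length ≠ 0 := by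
    intro x y hxy
    have hr : root y = root x := hrootadj hxy
    by_cases hx : x ∈ (f y : G.Walk y (root y)).support
    · -- f y starts with edge y → x
      refine ⟨y, x, Sym2.eq_swap, ?_, ?_⟩
      · have htu : ((f y : G.Walk y (root y)).takeUntil x hx).IsPath :=
          (f y).2.takeUntil hx
        have hedge : (Walk.cons hxy.symm Walk.nil : G.Walk y x).IsPath := by
          simp [Walk.cons_isPath_iff, hxy.ne']
        have hEq : (f y : G.Walk y (root y)).takeUntil x hx =
            Walk.cons hxy.symm Walk.nil :=
          congrArg Subtype.val <| h.path_unique ⟨_, htu⟩ ⟨_, hedge⟩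
        have hspec := (f y : G.Walk y (root y)).take_spec hx
        rw [hEq] at hspec
        rw [← hspec]
        simp [Walk.getVert_cons_succ]
      · have hspec := (f y : G.Walk y (root y)).take_spec hx
        intro hlen
        have := congrArg Walk.length hspec
        rw [Walk.length_append, hlen] at this
        have hEq : (f y : G.Walk y (root y)).takeUntil x hx =
            Walk.cons hxy.symm Walk.nil := by
          have htu : ((f y : G.Walk y (root y)).takeUntil x hx).IsPath :=
            (f y).2.takeUntil hx
          have hedge : (Walk.cons hxy.symm Walk.nil : G.Walk y x).IsPath := by
            simp [Walk.cons_isPath_iff, hxy.ne']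
          exact congrArg Subtype.val <| h.path_unique ⟨_, htu⟩ ⟨_, hedge⟩
        rw [hEq] at this
        simp at this
    · -- extend f y by the edge x → y
      refine ⟨x, y, rfl, ?_, ?_⟩
      · have hq : (Walk.cons hxy ((f y : G.Walk y (root y)).copy rfl hr) :
            G.Walk x (root x)).IsPath := by
          rw [Walk.cons_isPath_iff]
          constructor
          · simpa using (f y).2
          · simpa using hx
        have := huniq x _ hq
        rw [← this]
        simp [Walk.getVert_cons_succ]
      · have hq : (Walk.cons hxy ((f y : G.Walk y (root y)).copy rfl hr) :
            G.Walk x (root x)).IsPath := by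
          rw [Walk.cons_isPath_iff]
          constructor
          · simpa using (f y).2
          · simpa using hx
        have := huniq x _ hq
        rw [← this]
        simp
  -- surjection from non-root vertices onto edges
  obtain ⟨v₀⟩ := ‹Nonempty V›
  have hsurj : Set.SurjOn (fun v => s(v, (f v : G.Walk v (root v)).getVert 1))
      ↑(Finset.univ.erase (root v₀)) ↑G.edgeFinset := by
    intro e he
    simp only [Finset.coe_erase, Set.mem_diff] at *
    rw [Finset.mem_coe, mem_edgeFinset] at he
    induction e with
    | _ x y =>
      have hxy : G.Adj x y := he
      obtain ⟨z, w, hzw, hgv, hlen⟩ := hdich hxy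
      refine ⟨z, ?_, ?_⟩
      · constructor
        · simp
        · simp only [Set.mem_singleton_iff]
          intro hz
          apply hlen
          apply hlen0
          rw [hz, hrootroot]
      · simp only [hgv]
        exact hzw.symm
  calc G.edgeFinset.card ≤ (Finset.univ.erase (root v₀)).card :=
        Finset.card_le_card_of_surjOn _ hsurj
    _ < Fintype.card V := by
        rw [Finset.card_erase_of_mem (Finset.mem_univ _)]
        simpa using Fintype.card_pos

lemma exists_small_column (n : ℕ) (A : Matrix (Fin (n+1)) (Fin (n+1)) ℝ)
    (hforest : (SimpleGraph.fromRel (fun u v : Fin (n+1) ⊕ Fin (n+1) =>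
        ∃ i j : Fin (n+1), u = Sum.inl j ∧ v = Sum.inr i ∧ A i j ≠ 0)).IsAcyclic) :
    ∃ c, (Finset.univ.filter fun r => A r c ≠ 0).card ≤ 1 := by
  classical
  by_contra hcon
  push_neg at hcon
  set G := (SimpleGraph.fromRel (fun u v : Fin (n+1) ⊕ Fin (n+1) =>
      ∃ i j : Fin (n+1), u = Sum.inl j ∧ v = Sum.inr i ∧ A i j ≠ 0)) with hG
  set E := (Finset.univ.filter fun p : Fin (n+1) × Fin (n+1) => A p.1 p.2 ≠ 0) with hEdef
  have hinj : E.card ≤ G.edgeFinset.card := by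
    apply Finset.card_le_card_of_injOn (fun p => s(Sum.inl p.2, Sum.inr p.1))
    · intro p hp
      simp only [hEdef, Finset.mem_coe, Finset.mem_filter] at hp
      rw [Finset.mem_coe, mem_edgeFinset, mem_edgeSet, hG, fromRel_adj]
      exact ⟨by simp, Or.inl ⟨p.1, p.2, rfl, rfl, hp.2⟩⟩
    · intro p hp q hq hpq
      simp only [Sym2.eq_iff, Prod.mk.injEq] at hpq
      rcases hpq with ⟨h1, h2⟩ | h2
      · exact Prod.ext_iff.mpr ⟨Sum.inr.inj h2, Sum.inl.inj h1⟩
      · exact absurd h2.1 (by simp)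
  have hfib : E.card = ∑ c : Fin (n+1), (E.filter fun p => p.2 = c).card :=
    Finset.card_eq_sum_card_fiberwise (fun p _ => Finset.mem_univ p.2)
  have hlow : ∀ c : Fin (n+1), 2 ≤ (E.filter fun p => p.2 = c).card := by
    intro c
    refine le_trans (hcon c) ?_
    apply Finset.card_le_card_of_injOn (fun r => (r, c))
    · intro r hr
      simp only [hEdef, Finset.mem_coe, Finset.mem_filter] at hr ⊢
      simpa using hr.2
    · intro r _ r' _ hrr
      simpa using congrArg Prod.fst hrr
  have h2n : 2 * (n+1) ≤ E.card := by
    rw [hfib]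
    calc 2 * (n+1) = ∑ _c : Fin (n+1), 2 := by simp [mul_comm]
      _ ≤ _ := Finset.sum_le_sum fun c _ => hlow c
  have hcard := forest_card_edge_lt G hforest
  simp only [Fintype.card_sum, Fintype.card_fin] at hcard
  omega

lemma key : ∀ (n : ℕ) (A : Matrix (Fin n) (Fin n) ℝ),
    (SimpleGraph.fromRel (fun u v : Fin n ⊕ Fin n =>
        ∃ i j : Fin n, u = Sum.inl j ∧ v = Sum.inr i ∧ A i j ≠ 0)).IsAcyclic →
    ∃ σ₁ σ₂ : Equiv.Perm (Fin n), ∀ i j : Fin n, i < j → A (σ₁ i) (σ₂ j) = 0 := by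
  intro n
  induction n with
  | zero => exact fun A _ => ⟨1, 1, fun i => i.elim0⟩
  | succ n ih =>
    intro A hforest
    classical
    obtain ⟨c, hc⟩ := exists_small_column n A hforest
    set r : Fin (n+1) := if h : ∃ r, A r c ≠ 0 then h.choose else c with hrdef
    have hr : ∀ r', A r' c ≠ 0 → r' = r := by
      intro r' h'
      have hex : ∃ r, A r c ≠ 0 := ⟨r', h'⟩
      have hrmem : r ∈ Finset.univ.filter (fun r => A r c ≠ 0) := by
        simp only [hrdef, dif_pos hex]
        simpa using hex.choose_spec
      have hmem' : r' ∈ Finset.univ.filter (fun r => A r c ≠ 0) := by simpa using h'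
      exact Finset.card_le_one.mp hc _ hmem' _ hrmem
    set B : Matrix (Fin n) (Fin n) ℝ := fun i j => A (r.succAbove i) (c.succAbove j) with hB
    have hφinj : Function.Injective (Sum.map c.succAbove r.succAbove :
        Fin n ⊕ Fin n → Fin (n+1) ⊕ Fin (n+1)) :=
      Function.Injective.sumMap (Fin.succAbove_right_injective)
        (Fin.succAbove_right_injective)
    let F : (SimpleGraph.fromRel (fun u v : Fin n ⊕ Fin n =>
        ∃ i j : Fin n, u = Sum.inl j ∧ v = Sum.inr i ∧ B i j ≠ 0)) →g
        (SimpleGraph.fromRel (fun u v : Fin (n+1) ⊕ Fin (n+1) =>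
        ∃ i j : Fin (n+1), u = Sum.inl j ∧ v = Sum.inr i ∧ A i j ≠ 0)) := by
      refine ⟨Sum.map c.succAbove r.succAbove, ?_⟩
      intro a b hab
      rw [fromRel_adj] at hab ⊢
      obtain ⟨hne, hrel⟩ := hab
      refine ⟨fun hEq => hne (hφinj hEq), ?_⟩
      rcases hrel with ⟨i, j, ha, hb, hij⟩ | ⟨i, j, hb, ha, hij⟩
      · exact Or.inl ⟨r.succAbove i, c.succAbove j, by rw [ha]; rfl, by rw [hb]; rfl, hij⟩
      · exact Or.inr ⟨r.succAbove i, c.succAbove j, by rw [hb]; rfl, by rw [ha]; rfl, hij⟩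
    have hforestB : (SimpleGraph.fromRel (fun u v : Fin n ⊕ Fin n =>
        ∃ i j : Fin n, u = Sum.inl j ∧ v = Sum.inr i ∧ B i j ≠ 0)).IsAcyclic := by
      intro v p hp
      exact hforest (p.map F) (hp.map (f := F) hφinj)
    obtain ⟨σ₁', σ₂', hσ'⟩ := ih B hforestB
    refine ⟨(finSuccEquiv' (Fin.last n)).trans ((Equiv.optionCongr σ₁').trans
        (finSuccEquiv' r).symm),
      (finSuccEquiv' (Fin.last n)).trans ((Equiv.optionCongr σ₂').trans
        (finSuccEquiv' c).symm), ?_⟩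
    intro i j hij
    have hlast₁ : ((finSuccEquiv' (Fin.last n)).trans ((Equiv.optionCongr σ₂').trans
        (finSuccEquiv' c).symm)) (Fin.last n) = c := by
      simp [finSuccEquiv'_at, finSuccEquiv'_symm_none]
    have hcast : ∀ (σ : Equiv.Perm (Fin n)) (p : Fin (n+1)) (k : Fin n),
        ((finSuccEquiv' (Fin.last n)).trans ((Equiv.optionCongr σ).trans
        (finSuccEquiv' p).symm)) k.castSucc = p.succAbove (σ k) := by
      intro σ p k
      have h1 : finSuccEquiv' (Fin.last n) k.castSucc = some k :=
        finSuccEquiv'_below (Fin.castSucc_lt_last k)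
      simp [h1, finSuccEquiv'_symm_some]
    rcases Fin.eq_castSucc_or_eq_last j with ⟨j', rfl⟩ | rfl
    · have hilt : i < Fin.last n := lt_trans hij (Fin.castSucc_lt_last j')
      obtain ⟨i', rfl⟩ := Fin.exists_castSucc_eq.mpr (Fin.ne_last_of_lt hilt)
      rw [hcast, hcast]
      exact hσ' i' j' (by exact_mod_cast hij)
    · obtain ⟨i', rfl⟩ := Fin.exists_castSucc_eq.mpr (Fin.ne_last_of_lt hij)
      rw [hcast, hlast₁]
      by_contra hne
      exact Fin.succAbove_ne r _ (hr _ hne)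





/-- If the bipartite connective structure of a mixing matrix `A` (edge between
source `j` and observed variable `i` iff `A i j ≠ 0`) is acyclic as an undirected
graph (a polytree/forest), then `A` can be brought to lower triangular form by
separate row and column permutations. -/
theorem stmt_13 (n : ℕ) (A : Matrix (Fin n) (Fin n) ℝ)
    (hforest : (SimpleGraph.fromRel (fun u v : Fin n ⊕ Fin n =>
        ∃ i j : Fin n, u = Sum.inl j ∧ v = Sum.inr i ∧ A i j ≠ 0)).IsAcyclic) :
    ∃ σ₁ σ₂ : Equiv.Perm (Fin n), ∀ i j : Fin n, i < j →
      ((σ₁.permMatrix ℝ).transpose * A * σ₂.permMatrix ℝ) i j = 0 := by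
  obtain ⟨τ₁, τ₂, hτ⟩ := key n A hforest
  refine ⟨τ₁⁻¹, τ₂⁻¹, ?_⟩
  have hmat : ((τ₁⁻¹).permMatrix ℝ).transpose * A * (τ₂⁻¹).permMatrix ℝ =
      A.submatrix τ₁ τ₂ := by
    have h1 : ((τ₁⁻¹).permMatrix ℝ).transpose = (τ₁.toPEquiv.toMatrix : Matrix _ _ ℝ) := by
      rw [show (τ₁⁻¹).permMatrix ℝ = ((τ₁⁻¹).toPEquiv).toMatrix from rfl,
        ← PEquiv.toMatrix_symm, ← Equiv.toPEquiv_symm]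
      rfl
    rw [h1, show (τ₂⁻¹).permMatrix ℝ = ((τ₂⁻¹).toPEquiv).toMatrix from rfl,
      PEquiv.mul_toMatrix_toPEquiv, PEquiv.toMatrix_toPEquiv_mul]
    simp only [Matrix.submatrix_submatrix]
    rfl
  rw [hmat]
  intro i j hij
  exact hτ i j hij
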